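/- Let A be a finite set, F a field, k ≥ 1, and f : Π_k → F with f(0̂) = 1 and f(π) = 0 for all π ≠ 0̂. Then the partition indicator I_f satisfies: I_f(x_1,...,x_k) = 1 if x_1,...,x_k are pairwise distinct, I_f(x_1,...,x_k) = (-1)^k (k-1)! if x_1 = ... = x_k, and I_f(x_1,...,x_k) = 0 otherwise. -/

import Mathlib

open scoped Classical
open Finset

noncomputable instance setoidFintype {k : ℕ} : Fintype (Setoid (Fin k)) :=
  Fintype.ofInjective (fun s : Setoid (Fin k) => s.r)
    (fun a b h => by cases a; cases b; cases h; rfl)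

/-- δ_π : indicator that the coordinates of `x` within each block of the
partition `π` are equal, i.e. that `π` refines the kernel partition of `x`. -/
noncomputable def deltaFn {k : ℕ} {A : Type*} (F : Type*) [Zero F] [One F]
    (π : Setoid (Fin k)) (x : Fin k → A) : F :=
  if π ≤ Setoid.ker x then 1 else 0

/-- The partition indicator I_f associated to `f : Π_k → F` and the Möbius
function `μ` of the partition lattice:
I_f(x) = ∑_{τ < ⊤} (∑_π f(π)·μ(π,τ)) · δ_τ(x). -/
noncomputable def partInd {k : ℕ} {A F : Type*} [CommRing F]
    (μ : Setoid (Fin k) → Setoid (Fin k) → F) (f : Setoid (Fin k) → F)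
    (x : Fin k → A) : F :=
  ∑ τ ∈ univ.filter (fun τ : Setoid (Fin k) => τ < ⊤),
    (∑ π : Setoid (Fin k), f π * μ π τ) * deltaFn F τ x

namespace Stmt5Aux
open Equiv Equiv.Perm

open Equiv Equiv.Perm

variable {k : ℕ}
open Fin.NatCast

/-- relation of the orbit setoid holds between iterates -/
lemma rel_pow (τ : Setoid (Fin k)) (f : Perm (Fin k)) (h : ∀ a, τ (f a) a) :
    ∀ (n : ℕ) (a : Fin k), τ ((f ^ n) a) a := by
  intro n
  induction n with
  | zero => intro a; simpa using τ.refl' a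
  | succ n ih =>
    intro a
    have hrw : (f ^ (n + 1)) a = (f ^ n) (f a) := by rw [pow_succ, mul_apply]
    rw [hrw]
    exact τ.trans' (ih (f a)) (h a)

lemma orb_le_iff {τ : Setoid (Fin k)} {f : Perm (Fin k)} :
    SameCycle.setoid f ≤ τ ↔ ∀ a, τ (f a) a := by
  constructor
  · intro h a
    have : SameCycle f a (f a) := ⟨1, by simp⟩
    exact τ.symm' (Setoid.le_def.mp h this)
  · intro h
    rw [Setoid.le_def]
    intro x y hxy
    obtain ⟨i, hi⟩ := hxy
    cases i with
    | ofNat n =>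
      rw [Int.ofNat_eq_coe, zpow_natCast] at hi
      exact τ.symm' (hi ▸ rel_pow τ f h n x)
    | negSucc n =>
      rw [zpow_negSucc] at hi
      have hx : (f ^ (n + 1)) y = x := by
        rw [← hi]; exact Equiv.apply_symm_apply _ x
      exact hx ▸ rel_pow τ f h (n + 1) y

lemma orb_eq_bot_iff {f : Perm (Fin k)} : SameCycle.setoid f = ⊥ ↔ f = 1 := by
  constructor
  · intro h
    refine Equiv.ext fun a => ?_
    have hs : SameCycle f a (f a) := ⟨1, by simp⟩
    have : (⊥ : Setoid (Fin k)) a (f a) := h ▸ hs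
    exact this.symm
  · rintro rfl
    refine le_antisymm ?_ bot_le
    rw [Setoid.le_def]
    intro x y hxy
    exact sameCycle_one.mp hxy


/-- signed count of permutations with given orbit setoid -/
noncomputable def N (τ : Setoid (Fin k)) : ℤ :=
  ∑ f ∈ univ.filter (fun f : Perm (Fin k) => SameCycle.setoid f = τ),
    ((Equiv.Perm.sign f : ℤˣ) : ℤ)

lemma N_bot : N (⊥ : Setoid (Fin k)) = 1 := by
  have hf : univ.filter (fun f : Perm (Fin k) => SameCycle.setoid f = ⊥) = {1} := by
    ext f; simp [orb_eq_bot_iff]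
  rw [N, hf]
  simp

lemma sum_sign_le (τ : Setoid (Fin k)) (hτ : τ ≠ ⊥) :
    ∑ f ∈ univ.filter (fun f : Perm (Fin k) => SameCycle.setoid f ≤ τ),
      ((Equiv.Perm.sign f : ℤˣ) : ℤ) = 0 := by
  have hex : ∃ i j : Fin k, i ≠ j ∧ τ i j := by
    by_contra h
    push_neg at h
    apply hτ
    refine le_antisymm ?_ bot_le
    rw [Setoid.le_def]
    intro x y hxy
    by_contra hne
    exact (h x y hne) hxy
  obtain ⟨i, j, hij, hrel⟩ := hex
  refine Finset.sum_involution (fun f _ => Equiv.swap i j * f) ?_ ?_ ?_ ?_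
  · intro f _
    rw [Equiv.Perm.sign_mul, Equiv.Perm.sign_swap hij]
    simp
  · intro f _ _ hEq
    have h1 : Equiv.swap i j * f = 1 * f := by rw [hEq, one_mul]
    exact hij (Equiv.swap_eq_one_iff.mp (mul_right_cancel h1))
  · intro f hf
    simp only [Finset.mem_filter, Finset.mem_univ, true_and] at hf ⊢
    rw [orb_le_iff] at hf ⊢
    intro a
    rcases eq_or_ne (f a) i with h1 | h1
    · rw [Equiv.Perm.mul_apply, h1, Equiv.swap_apply_left]
      exact τ.trans' (τ.symm' hrel) (h1 ▸ hf a)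
    rcases eq_or_ne (f a) j with h2 | h2
    · rw [Equiv.Perm.mul_apply, h2, Equiv.swap_apply_right]
      exact τ.trans' hrel (h2 ▸ hf a)
    · rw [Equiv.Perm.mul_apply, Equiv.swap_apply_of_ne_of_ne h1 h2]
      exact hf a
  · intro f _
    show Equiv.swap i j * (Equiv.swap i j * f) = f
    rw [← mul_assoc, Equiv.swap_mul_self, one_mul]

lemma sum_N_le (τ : Setoid (Fin k)) :
    ∑ z ∈ univ.filter (· ≤ τ), N z
      = ∑ f ∈ univ.filter (fun f : Perm (Fin k) => SameCycle.setoid f ≤ τ),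
          ((Equiv.Perm.sign f : ℤˣ) : ℤ) := by
  rw [← Finset.sum_fiberwise_of_maps_to
    (g := fun f : Perm (Fin k) => SameCycle.setoid f)
    (t := univ.filter (· ≤ τ))
    (fun f hf => by
      simp only [Finset.mem_filter, Finset.mem_univ, true_and] at hf ⊢
      exact hf)]
  refine Finset.sum_congr rfl fun z hz => ?_
  simp only [Finset.mem_filter, Finset.mem_univ, true_and] at hz
  rw [N]
  congr 1
  rw [Finset.filter_filter]
  ext f
  simp only [Finset.mem_filter, Finset.mem_univ, true_and]
  exact ⟨fun h => ⟨h ▸ hz, h⟩, And.right⟩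

lemma sum_N_le_eq_zero (τ : Setoid (Fin k)) (hτ : τ ≠ ⊥) :
    ∑ z ∈ univ.filter (· ≤ τ), N z = 0 := by
  rw [sum_N_le]; exact sum_sign_le τ hτ


lemma rot_pow_apply (n m : ℕ) (i : Fin (n + 1)) :
    ((finRotate (n + 1)) ^ m) i = i + (m : Fin (n + 1)) := by
  induction m with
  | zero => simp
  | succ m ih =>
    rw [pow_succ', Equiv.Perm.mul_apply, ih, finRotate_succ_apply]
    push_cast
    exact add_assoc _ _ _

lemma orb_conj (n : ℕ) (l : Perm (Fin (n + 1))) :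
    SameCycle.setoid (l * finRotate (n + 1) * l⁻¹) = ⊤ := by
  rw [Setoid.eq_top_iff]
  intro x y
  show SameCycle _ x y
  rw [sameCycle_conj]
  refine ⟨(((l⁻¹ y) - (l⁻¹ x) : Fin (n + 1)) : ℕ), ?_⟩
  rw [zpow_natCast, rot_pow_apply, Fin.cast_val_eq_self]
  abel

lemma exists_conj (n : ℕ) (f : Perm (Fin (n + 1)))
    (hf : SameCycle.setoid f = ⊤) :
    ∃ l : Perm (Fin (n + 1)), l * finRotate (n + 1) * l⁻¹ = f := by
  rw [Setoid.eq_top_iff] at hf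
  have claim : ∀ d : ℕ, (f ^ d) 0 = 0 → d ≠ 0 → n + 1 ≤ d := by
    intro d hd hd0
    have hsurj : Function.Surjective
        (fun m : Fin d => (f ^ (m : ℕ)) (0 : Fin (n + 1))) := by
      intro b
      obtain ⟨i, hi⟩ := (hf 0 b : SameCycle f 0 b)
      have hdpos : (0 : ℤ) < d := by exact_mod_cast Nat.pos_of_ne_zero hd0
      have hmod0 : (0 : ℤ) ≤ i % d := Int.emod_nonneg i (by exact_mod_cast hd0)
      have hmodlt : i % d < d := Int.emod_lt_of_pos i hdpos
      refine ⟨⟨(i % d).toNat, by omega⟩, ?_⟩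
      show (f ^ ((i % d).toNat)) (0 : Fin (n + 1)) = b
      have h1 : (((i % d).toNat : ℕ) : ℤ) = i % d := Int.toNat_of_nonneg hmod0
      have hfix : ∀ q : ℤ, (f ^ ((d : ℤ) * q)) (0 : Fin (n + 1)) = 0 := by
        intro q
        rw [zpow_mul, zpow_natCast]
        exact Equiv.Perm.zpow_apply_eq_self_of_apply_eq_self hd q
      have hq : (f ^ (i % (d : ℤ))) (0 : Fin (n + 1)) = (f ^ i) 0 := by
        conv_rhs => rw [← Int.emod_add_mul_ediv i d]
        rw [zpow_add, Equiv.Perm.mul_apply, hfix]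
      rw [← zpow_natCast, h1, hq, hi]
    have hcard := Fintype.card_le_of_surjective _ hsurj
    simpa using hcard
  have hpowinj : ∀ iv jv : ℕ, iv ≤ jv → jv < n + 1 →
      (f ^ iv) (0 : Fin (n + 1)) = (f ^ jv) 0 → iv = jv := by
    intro iv jv hij hjlt heq
    by_contra hne
    have hd : (f ^ (jv - iv)) (0 : Fin (n + 1)) = 0 := by
      apply (f ^ iv).injective
      rw [← Equiv.Perm.mul_apply, ← pow_add]
      have : iv + (jv - iv) = jv := by omega
      rw [this, ← heq]
    have := claim (jv - iv) hd (by omega)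
    omega
  have hLinj : Function.Injective
      (fun i : Fin (n + 1) => (f ^ (i : ℕ)) (0 : Fin (n + 1))) := by
    intro i j h
    rcases le_or_gt (i : ℕ) (j : ℕ) with hle | hlt
    · exact Fin.ext (hpowinj _ _ hle j.isLt h)
    · exact (Fin.ext (hpowinj _ _ hlt.le i.isLt h.symm)).symm
  have hLbij := Finite.injective_iff_bijective.mp hLinj
  set l := Equiv.ofBijective _ hLbij with hl
  have hlapp : ∀ i : Fin (n + 1), l i = (f ^ (i : ℕ)) 0 := fun i => rfl
  have hfk : (f ^ (n + 1)) (0 : Fin (n + 1)) = 0 := by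
    obtain ⟨i, hi⟩ := hLbij.surjective ((f ^ (n + 1)) 0)
    rcases Nat.eq_zero_or_pos (i : ℕ) with h0 | hpos
    · simp only [h0, pow_zero] at hi
      exact hi.symm
    · exfalso
      have hd : (f ^ (n + 1 - (i : ℕ))) (0 : Fin (n + 1)) = 0 := by
        apply (f ^ (i : ℕ)).injective
        rw [← Equiv.Perm.mul_apply, ← pow_add]
        have : (i : ℕ) + (n + 1 - (i : ℕ)) = n + 1 := by omega
        rw [this]
        exact hi.symm
      have := claim _ hd (by omega)
      omega
  refine ⟨l, ?_⟩
  refine Equiv.ext fun x => ?_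
  obtain ⟨i, rfl⟩ := l.surjective x
  rw [Equiv.Perm.mul_apply, Equiv.Perm.mul_apply, Equiv.Perm.inv_def, Equiv.symm_apply_apply]
  rw [hlapp, hlapp, finRotate_succ_apply]
  have hstep : f ((f ^ (i : ℕ)) (0 : Fin (n + 1))) = (f ^ ((i : ℕ) + 1)) 0 := by
    rw [pow_succ', Equiv.Perm.mul_apply]
  rw [hstep]
  rcases eq_or_ne i (Fin.last n) with rfl | hne
  · have h1 : (Fin.last n + 1 : Fin (n + 1)) = 0 := by
      rw [Fin.ext_iff, Fin.val_add_one]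
      simp
    rw [h1]
    simp only [Fin.val_zero, pow_zero, Equiv.Perm.coe_one, id_eq, Fin.val_last]
    exact hfk.symm
  · have h1 : ((i + 1 : Fin (n + 1)) : ℕ) = (i : ℕ) + 1 := by
      rw [Fin.val_add_one]
      simp [hne]
    rw [h1]

lemma fiber_card (n : ℕ) (f : Perm (Fin (n + 1)))
    (hf : SameCycle.setoid f = ⊤) :
    (univ.filter (fun l : Perm (Fin (n + 1)) =>
      l * finRotate (n + 1) * l⁻¹ = f)).card = n + 1 := by
  obtain ⟨l0, hl0⟩ := exists_conj n f hf
  set c := finRotate (n + 1) with hc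
  have hc0 : ∀ m : Fin (n + 1), (c ^ (m : ℕ)) 0 = m := by
    intro m
    rw [rot_pow_apply]
    simp [Fin.cast_val_eq_self]
  have hmemfib : ∀ j : Fin (n + 1), (l0 * c ^ (j : ℕ)) * c * (l0 * c ^ (j : ℕ))⁻¹ = f := by
    intro j
    have hcomm : c ^ (j : ℕ) * c = c * c ^ (j : ℕ) := ((Commute.refl c).pow_left _).eq
    calc l0 * c ^ (j : ℕ) * c * (l0 * c ^ (j : ℕ))⁻¹
        = l0 * (c ^ (j : ℕ) * c * (c ^ (j : ℕ))⁻¹) * l0⁻¹ := by group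
      _ = l0 * c * l0⁻¹ := by
            have h2 : c ^ (j : ℕ) * c * (c ^ (j : ℕ))⁻¹ = c := by
              rw [hcomm, mul_inv_cancel_right]
            rw [h2]
      _ = f := hl0
  have hcard := Finset.card_bij'
    (s := (univ : Finset (Fin (n + 1))))
    (t := univ.filter (fun l : Perm (Fin (n + 1)) => l * c * l⁻¹ = f))
    (fun j _ => l0 * c ^ (j : ℕ)) (fun l _ => (l0⁻¹ * l) 0)
    (fun j _ => by
      simp only [Finset.mem_filter, Finset.mem_univ, true_and]
      exact hmemfib j)
    (fun l _ => Finset.mem_univ _)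
    (fun j _ => by
      rw [← mul_assoc, inv_mul_cancel, one_mul, hc0])
    (fun l hl => by
      simp only [Finset.mem_filter, Finset.mem_univ, true_and] at hl
      set g := l0⁻¹ * l with hg
      have hgc : g * c * g⁻¹ = c := by
        have hcc : l * c * l⁻¹ = l0 * c * l0⁻¹ := hl.trans hl0.symm
        calc g * c * g⁻¹ = l0⁻¹ * (l * c * l⁻¹) * l0 := by rw [hg]; group
          _ = l0⁻¹ * (l0 * c * l0⁻¹) * l0 := by rw [hcc]
          _ = c := by group
      have hgcm : ∀ m : ℕ, g * c ^ m = c ^ m * g := by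
        intro m
        have hc2 : Commute g c := by
          have h3 := hgc
          rw [mul_inv_eq_iff_eq_mul] at h3
          exact h3
        exact (hc2.pow_right m).eq
      have hgeq : g = c ^ ((g 0 : Fin (n + 1)) : ℕ) := by
        refine Equiv.ext fun i => ?_
        have h1 : g i = (c ^ (i : ℕ)) (g 0) := by
          conv_lhs => rw [← hc0 i, ← Equiv.Perm.mul_apply, hgcm, Equiv.Perm.mul_apply]
        rw [h1, rot_pow_apply, rot_pow_apply, Fin.cast_val_eq_self, Fin.cast_val_eq_self]
        exact add_comm _ _
      calc l0 * c ^ (((l0⁻¹ * l) 0 : Fin (n + 1)) : ℕ) = l0 * g := by rw [← hgeq]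
        _ = l := by rw [hg, ← mul_assoc, mul_inv_cancel, one_mul])
  simpa using hcard.symm


lemma card_transitive (n : ℕ) :
    (univ.filter (fun f : Perm (Fin (n + 1)) =>
      SameCycle.setoid f = ⊤)).card = (Nat.factorial n) := by
  have H : ∀ l ∈ (univ : Finset (Perm (Fin (n + 1)))),
      l * finRotate (n + 1) * l⁻¹ ∈
        univ.filter (fun f : Perm (Fin (n + 1)) => SameCycle.setoid f = ⊤) := by
    intro l _
    simp only [Finset.mem_filter, Finset.mem_univ, true_and]
    exact orb_conj n l
  have hcard := Finset.card_eq_sum_card_fiberwise H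
  rw [Finset.sum_congr rfl (fun f hf => by
    simp only [Finset.mem_filter, Finset.mem_univ, true_and] at hf
    exact fiber_card n f hf)] at hcard
  rw [Finset.sum_const, Finset.card_univ, Fintype.card_perm, Fintype.card_fin,
    smul_eq_mul] at hcard
  have h2 : (n + 1) * (Nat.factorial n) =
      (univ.filter (fun f : Perm (Fin (n + 1)) =>
        SameCycle.setoid f = ⊤)).card * (n + 1) := by
    rw [← Nat.factorial_succ]
    exact hcard
  exact (Nat.eq_of_mul_eq_mul_left (Nat.succ_pos n) (h2.trans (mul_comm _ _))).symm

lemma sign_transitive (n : ℕ) (f : Perm (Fin (n + 1)))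
    (hf : SameCycle.setoid f = ⊤) :
    Equiv.Perm.sign f = (-1 : ℤˣ) ^ n := by
  obtain ⟨l, rfl⟩ := exists_conj n f hf
  rw [Equiv.Perm.sign_mul, Equiv.Perm.sign_mul, Equiv.Perm.sign_inv, sign_finRotate]
  rw [mul_comm (Equiv.Perm.sign l), mul_assoc]
  simp

lemma N_top (n : ℕ) :
    N (⊤ : Setoid (Fin (n + 1))) = ((Nat.factorial n) : ℤ) * (-1) ^ n := by
  have hsum : ∑ f ∈ univ.filter (fun f : Perm (Fin (n + 1)) =>
        SameCycle.setoid f = ⊤), ((Equiv.Perm.sign f : ℤˣ) : ℤ)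
      = ∑ _f ∈ univ.filter (fun f : Perm (Fin (n + 1)) =>
        SameCycle.setoid f = ⊤), ((-1 : ℤ)) ^ n :=
    Finset.sum_congr rfl (fun f hf => by
      simp only [Finset.mem_filter, Finset.mem_univ, true_and] at hf
      rw [sign_transitive n f hf]
      simp)
  rw [N, hsum, Finset.sum_const, card_transitive, nsmul_eq_mul]

end Stmt5Aux


/-- For f with f(⊥)=1 and f(π)=0 otherwise, the partition indicator is the
distinctness indicator: it is 1 on tuples of pairwise distinct elements,
(-1)^k (k-1)! on constant tuples, and 0 otherwise. -/
theorem stmt5 {k : ℕ} (hk : 2 ≤ k) {A F : Type*} [Fintype A] [Field F]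
    (μ : Setoid (Fin k) → Setoid (Fin k) → F)
    (hrefl : ∀ x, μ x x = 1)
    (hzero : ∀ x y, ¬ x ≤ y → μ x y = 0)
    (hsum : ∀ x y : Setoid (Fin k), x < y →
      ∑ z ∈ univ.filter (fun z => x ≤ z ∧ z ≤ y), μ x z = 0) :
    (∀ x : Fin k → A, Function.Injective x →
      partInd μ (fun π : Setoid (Fin k) => if π = ⊥ then (1 : F) else 0) x = 1) ∧
    (∀ x : Fin k → A, Setoid.ker x = ⊤ →
      partInd μ (fun π : Setoid (Fin k) => if π = ⊥ then (1 : F) else 0) x =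
        (-1 : F) ^ k * (Nat.factorial (k - 1))) ∧
    (∀ x : Fin k → A, ¬ Function.Injective x → Setoid.ker x ≠ ⊤ →
      partInd μ (fun π : Setoid (Fin k) => if π = ⊥ then (1 : F) else 0) x = 0) := by
  obtain ⟨m, rfl⟩ : ∃ m, k = m + 2 := ⟨k - 2, by omega⟩
  clear hk
  have hbot_ne_top : (⊥ : Setoid (Fin (m + 2))) ≠ ⊤ := by
    intro h
    have h01 : (⊥ : Setoid (Fin (m + 2))) 0 1 := by rw [h]; trivial
    have h2 : (0 : Fin (m + 2)) = 1 := h01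
    simp [Fin.ext_iff] at h2
  have coeff : ∀ τ : Setoid (Fin (m + 2)),
      (∑ π : Setoid (Fin (m + 2)), (if π = ⊥ then (1 : F) else 0) * μ π τ) = μ ⊥ τ := by
    intro τ
    rw [Finset.sum_eq_single ⊥]
    · simp
    · intro b _ hb; simp [hb]
    · intro h; exact absurd (Finset.mem_univ _) h
  have hInd : ∀ x : Fin (m + 2) → A,
      partInd μ (fun π : Setoid (Fin (m + 2)) => if π = ⊥ then (1 : F) else 0) x
        = ∑ τ ∈ univ.filter (fun τ : Setoid (Fin (m + 2)) => τ < ⊤),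
            μ ⊥ τ * deltaFn F τ x := by
    intro x
    unfold partInd
    exact Finset.sum_congr rfl fun τ _ => by rw [coeff]
  have key : ∀ τ : Setoid (Fin (m + 2)), μ ⊥ τ = ((Stmt5Aux.N τ : ℤ) : F) := by
    intro τ
    induction τ using WellFoundedLT.induction with
    | _ τ IH =>
    rcases eq_or_ne τ ⊥ with rfl | hτ
    · rw [hrefl, Stmt5Aux.N_bot]; norm_num
    · have hlt : ⊥ < τ := bot_lt_iff_ne_bot.mpr hτ
      have hs := hsum ⊥ τ hlt
      have hfil : univ.filter (fun z : Setoid (Fin (m + 2)) => ⊥ ≤ z ∧ z ≤ τ)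
          = univ.filter (fun z => z ≤ τ) := by
        ext z; simp [bot_le]
      have hins : (univ.filter (fun z : Setoid (Fin (m + 2)) => z ≤ τ))
          = insert τ (univ.filter (fun z => z < τ)) := by
        ext z
        simp only [Finset.mem_filter, Finset.mem_univ, true_and, Finset.mem_insert]
        constructor
        · intro h
          rcases eq_or_lt_of_le h with h1 | h1
          · exact Or.inl h1
          · exact Or.inr h1
        · rintro (rfl | h)
          · exact le_refl _
          · exact le_of_lt h
      have hnotmem : τ ∉ univ.filter (fun z : Setoid (Fin (m + 2)) => z < τ) := by simp
      rw [hfil, hins, Finset.sum_insert hnotmem] at hs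
      have hsZ : Stmt5Aux.N τ
          + ∑ z ∈ univ.filter (fun z : Setoid (Fin (m + 2)) => z < τ), Stmt5Aux.N z = 0 := by
        have h0 := Stmt5Aux.sum_N_le_eq_zero τ hτ
        rw [hins, Finset.sum_insert hnotmem] at h0
        exact h0
      have hIHsum : ∑ z ∈ univ.filter (fun z : Setoid (Fin (m + 2)) => z < τ), μ ⊥ z
          = ((∑ z ∈ univ.filter (fun z : Setoid (Fin (m + 2)) => z < τ),
              Stmt5Aux.N z : ℤ) : F) := by
        push_cast
        refine Finset.sum_congr rfl fun z hz => ?_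
        exact IH z (by simpa using hz)
      have h1 : μ ⊥ τ = - ∑ z ∈ univ.filter (fun z : Setoid (Fin (m + 2)) => z < τ), μ ⊥ z :=
        eq_neg_of_add_eq_zero_left hs
      have h2 : ∑ z ∈ univ.filter (fun z : Setoid (Fin (m + 2)) => z < τ), Stmt5Aux.N z
          = - Stmt5Aux.N τ := eq_neg_of_add_eq_zero_right hsZ
      rw [h1, hIHsum, h2]
      push_cast
      ring
  refine ⟨?_, ?_, ?_⟩
  · -- injective case
    intro x hx
    rw [hInd]
    have hker : Setoid.ker x = ⊥ := (Setoid.injective_iff_ker_bot x).mp hx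
    rw [Finset.sum_eq_single ⊥]
    · rw [hrefl]
      simp [deltaFn]
    · intro τ _ hne
      have hn : ¬ τ ≤ Setoid.ker x := by
        rw [hker]
        exact fun h => hne (le_bot_iff.mp h)
      simp [deltaFn, hn]
    · intro h
      exact absurd (by simp [hbot_ne_top.lt_top]) h
  · -- constant case
    intro x hker
    rw [hInd]
    have hδ : ∀ τ : Setoid (Fin (m + 2)), deltaFn F τ x = 1 := by
      intro τ
      simp [deltaFn, hker, le_top]
    have hstep : ∑ τ ∈ univ.filter (fun τ : Setoid (Fin (m + 2)) => τ < ⊤),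
        μ ⊥ τ * deltaFn F τ x
        = ((∑ τ ∈ univ.filter (fun τ : Setoid (Fin (m + 2)) => τ < ⊤),
            Stmt5Aux.N τ : ℤ) : F) := by
      push_cast
      refine Finset.sum_congr rfl fun τ _ => ?_
      rw [hδ, mul_one, key]
    have huniv : (univ : Finset (Setoid (Fin (m + 2))))
        = insert ⊤ (univ.filter (fun z => z < ⊤)) := by
      ext z
      simp only [Finset.mem_filter, Finset.mem_univ, true_and, Finset.mem_insert]
      rcases eq_or_lt_of_le (le_top : z ≤ ⊤) with h1 | h1
      · exact ⟨fun _ => Or.inl h1, fun _ => trivial⟩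
      · exact ⟨fun _ => Or.inr h1, fun _ => trivial⟩
    have hnotmem : (⊤ : Setoid (Fin (m + 2)))
        ∉ univ.filter (fun z : Setoid (Fin (m + 2)) => z < ⊤) := by simp
    have hzero : ∑ z ∈ (univ : Finset (Setoid (Fin (m + 2)))), Stmt5Aux.N z = 0 := by
      have h0 := Stmt5Aux.sum_N_le_eq_zero (⊤ : Setoid (Fin (m + 2))) (Ne.symm hbot_ne_top)
      have hfil : univ.filter (fun z : Setoid (Fin (m + 2)) => z ≤ ⊤) = univ := by
        ext z; simp [le_top]
      rwa [hfil] at h0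
    rw [huniv, Finset.sum_insert hnotmem] at hzero
    have hsum2 : ∑ τ ∈ univ.filter (fun τ : Setoid (Fin (m + 2)) => τ < ⊤), Stmt5Aux.N τ
        = - Stmt5Aux.N (⊤ : Setoid (Fin (m + 2))) := eq_neg_of_add_eq_zero_right hzero
    rw [hstep, hsum2]
    have hN : Stmt5Aux.N (⊤ : Setoid (Fin (m + 2)))
        = ((Nat.factorial (m + 1)) : ℤ) * (-1) ^ (m + 1) := Stmt5Aux.N_top (m + 1)
    rw [hN]
    have hm : m + 2 - 1 = m + 1 := by omega
    rw [hm]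
    push_cast
    ring
  · -- intermediate case
    intro x hninj hker
    rw [hInd]
    have hbot : Setoid.ker x ≠ ⊥ := fun h => hninj ((Setoid.injective_iff_ker_bot x).mpr h)
    have hlt : ⊥ < Setoid.ker x := bot_lt_iff_ne_bot.mpr hbot
    have hs := hsum ⊥ (Setoid.ker x) hlt
    have htrans : ∑ τ ∈ univ.filter (fun τ : Setoid (Fin (m + 2)) => τ < ⊤),
        μ ⊥ τ * deltaFn F τ x
        = ∑ τ ∈ univ.filter (fun τ : Setoid (Fin (m + 2)) =>
            ⊥ ≤ τ ∧ τ ≤ Setoid.ker x), μ ⊥ τ := by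
      simp only [deltaFn, mul_ite, mul_one, mul_zero]
      rw [← Finset.sum_filter, Finset.filter_filter]
      congr 1
      ext τ
      simp only [Finset.mem_filter, Finset.mem_univ, true_and]
      constructor
      · intro h; exact ⟨bot_le, h.2⟩
      · intro h; exact ⟨lt_of_le_of_lt h.2 (hker.lt_top), h.2⟩
    rw [htrans]
    exact hs
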